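/- Let R be a domain. Then R has the finite t-basic ideal property if and only if for every nonzero finitely generated ideal I of R, I_t equals the set Î := {x ∈ R : I is a t-reduction of (I, x)}. -/
import Mathlib


open scoped nonZeroDivisors

/-- The `v`-operation (divisorial closure) on `R`-submodules of the fraction field `K`:
`I_v = (I⁻¹)⁻¹` where `I⁻¹ = (R : I) = 1 / I`. -/
noncomputable def vS (R K : Type*) [CommRing R] [Field K] [Algebra R K]
    (I : Submodule R K) : Submodule R K := 1 / (1 / I)

/-- The `t`-operation: `I_t = ⋃ J_v` where `J` ranges over nonzero finitely generated
sub-ideals of `I`. -/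
noncomputable def tS (R K : Type*) [CommRing R] [Field K] [Algebra R K]
    (I : Submodule R K) : Submodule R K :=
  ⨆ J ∈ {J : Submodule R K | J ≠ ⊥ ∧ J.FG ∧ J ≤ I}, vS R K J

/-- The image of an ideal of `R` in the fraction field `K`, as an `R`-submodule. -/
noncomputable def idealToSub (R K : Type*) [CommRing R] [Field K] [Algebra R K]
    (I : Ideal R) : Submodule R K := Submodule.map (Algebra.linearMap R K) I

/-- The `t`-closure of an ideal of `R`, computed in the fraction field `K`. -/
noncomputable def tI (R K : Type*) [CommRing R] [Field K] [Algebra R K]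
    (I : Ideal R) : Submodule R K := tS R K (idealToSub R K I)

/-- The `v`-closure of an ideal of `R`, computed in the fraction field `K`. -/
noncomputable def vI (R K : Type*) [CommRing R] [Field K] [Algebra R K]
    (I : Ideal R) : Submodule R K := vS R K (idealToSub R K I)

namespace TBasicAux

variable {R K : Type*} [CommRing R] [Field K] [Algebra R K]

/-! ### Basic facts about the `v`-operation -/

lemma le_vS (A : Submodule R K) : A ≤ vS R K A :=
  Submodule.le_div_iff_mul_le.mpr Submodule.mul_one_div_le_one

lemma one_div_anti {A B : Submodule R K} (h : A ≤ B) : 1 / B ≤ 1 / A := by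
  rw [Submodule.le_div_iff_mul_le]
  calc (1 / B) * A ≤ (1 / B) * B := mul_le_mul' le_rfl h
    _ ≤ 1 := by rw [mul_comm]; exact Submodule.mul_one_div_le_one

lemma vS_mono {A B : Submodule R K} (h : A ≤ B) : vS R K A ≤ vS R K B :=
  one_div_anti (one_div_anti h)

lemma one_div_one_div_one_div (A : Submodule R K) : 1 / (1 / (1 / A)) = 1 / A :=
  le_antisymm (one_div_anti (le_vS A)) (le_vS (1 / A))

lemma vS_idem (A : Submodule R K) : vS R K (vS R K A) = vS R K A :=
  one_div_one_div_one_div (1 / A)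

/-! ### Basic facts about the `t`-operation -/

lemma vS_le_tS {A C : Submodule R K} (h : C ≠ ⊥ ∧ C.FG ∧ C ≤ A) :
    vS R K C ≤ tS R K A :=
  le_iSup₂_of_le C h le_rfl

lemma le_tS (A : Submodule R K) : A ≤ tS R K A := by
  intro x hx
  rcases eq_or_ne x 0 with rfl | hx0
  · exact (tS R K A).zero_mem
  · refine vS_le_tS ⟨?_, Submodule.fg_span_singleton x,
      (Submodule.span_singleton_le_iff_mem x A).mpr hx⟩ (le_vS _ (Submodule.mem_span_singleton_self x))
    simpa [Submodule.span_singleton_eq_bot] using hx0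

lemma tS_mono {A B : Submodule R K} (h : A ≤ B) : tS R K A ≤ tS R K B :=
  iSup₂_le fun _C hC => vS_le_tS ⟨hC.1, hC.2.1, hC.2.2.trans h⟩

lemma tS_bot : tS R K (⊥ : Submodule R K) = ⊥ :=
  le_bot_iff.mp <| iSup₂_le fun _C hC => absurd (le_bot_iff.mp hC.2.2) hC.1

lemma exists_of_mem_tS {A : Submodule R K} (hA : A ≠ ⊥) {x : K} (hx : x ∈ tS R K A) :
    ∃ C : Submodule R K, C ≠ ⊥ ∧ C.FG ∧ C ≤ A ∧ x ∈ vS R K C := by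
  obtain ⟨a, haA, ha0⟩ := Submodule.exists_mem_ne_zero_of_ne_bot hA
  have hne : Nonempty {C : Submodule R K // C ≠ ⊥ ∧ C.FG ∧ C ≤ A} :=
    ⟨⟨Submodule.span R {a}, by simpa [Submodule.span_singleton_eq_bot] using ha0,
      Submodule.fg_span_singleton a, (Submodule.span_singleton_le_iff_mem a A).mpr haA⟩⟩
  have hdir : Directed (· ≤ ·) (fun C : {C : Submodule R K // C ≠ ⊥ ∧ C.FG ∧ C ≤ A} => vS R K C.1) := by
    rintro ⟨C, hC⟩ ⟨D, hD⟩
    refine ⟨⟨C ⊔ D, ?_, hC.2.1.sup hD.2.1, sup_le hC.2.2 hD.2.2⟩,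
      vS_mono le_sup_left, vS_mono le_sup_right⟩
    intro h
    exact hC.1 (le_bot_iff.mp (h ▸ (le_sup_left : C ≤ C ⊔ D)))
  have htS : tS R K A = ⨆ C : {C : Submodule R K // C ≠ ⊥ ∧ C.FG ∧ C ≤ A}, vS R K C.1 := by
    rw [tS, iSup_subtype]
    rfl
  rw [htS, Submodule.mem_iSup_of_directed _ hdir] at hx
  obtain ⟨⟨C, hC⟩, hxC⟩ := hx
  exact ⟨C, hC.1, hC.2.1, hC.2.2, hxC⟩

lemma fg_le_tS_exists {A B : Submodule R K} (hA : A ≠ ⊥) (hB : B.FG) (hle : B ≤ tS R K A) :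
    ∃ C : Submodule R K, C ≠ ⊥ ∧ C.FG ∧ C ≤ A ∧ B ≤ vS R K C := by
  obtain ⟨a, haA, ha0⟩ := Submodule.exists_mem_ne_zero_of_ne_bot hA
  obtain ⟨s, rfl⟩ := hB
  have hsub : (↑s : Set K) ⊆ (tS R K A : Set K) := fun y hy =>
    hle (Submodule.subset_span hy)
  clear hle
  classical
  induction s using Finset.induction_on with
  | empty =>
      exact ⟨Submodule.span R {a}, by simpa [Submodule.span_singleton_eq_bot] using ha0,
        Submodule.fg_span_singleton a, (Submodule.span_singleton_le_iff_mem a A).mpr haA,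
        by simp⟩
  | @insert x s hxs ih =>
      have hx : x ∈ tS R K A := hsub (by simp)
      obtain ⟨C₁, h10, h1fg, h1le, h1v⟩ := exists_of_mem_tS hA hx
      obtain ⟨C₂, h20, h2fg, h2le, h2v⟩ := ih (fun y hy => hsub (by simp [hy]))
      refine ⟨C₁ ⊔ C₂, ?_, Submodule.FG.sup h1fg h2fg, sup_le h1le h2le, ?_⟩
      · intro h
        exact h10 (le_bot_iff.mp (h ▸ (le_sup_left : C₁ ≤ C₁ ⊔ C₂)))
      · rw [Finset.coe_insert, Submodule.span_insert]
        refine sup_le ?_ (h2v.trans (vS_mono le_sup_right))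
        exact ((Submodule.span_singleton_le_iff_mem x _).mpr h1v).trans (vS_mono le_sup_left)

lemma tS_idem (A : Submodule R K) : tS R K (tS R K A) = tS R K A := by
  refine le_antisymm (iSup₂_le fun C hC => ?_) (tS_mono (le_tS A))
  have hA : A ≠ ⊥ := by
    intro h
    subst h
    rw [tS_bot] at hC
    exact hC.1 (le_bot_iff.mp hC.2.2)
  obtain ⟨D, hD0, hDfg, hDle, hCD⟩ := fg_le_tS_exists hA hC.2.1 hC.2.2
  calc vS R K C ≤ vS R K (vS R K D) := vS_mono hCD
    _ = vS R K D := vS_idem D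
    _ ≤ tS R K A := vS_le_tS ⟨hD0, hDfg, hDle⟩

/-! ### Multiplicativity -/

lemma mul_vS_le (A D : Submodule R K) : A * vS R K D ≤ vS R K (A * D) := by
  show A * (1 / (1 / D)) ≤ 1 / (1 / (A * D))
  rw [Submodule.le_div_iff_mul_le]
  have h1 : A * (1 / (A * D)) ≤ 1 / D := by
    rw [Submodule.le_div_iff_mul_le, Submodule.mul_le]
    intro y hy d hd
    refine Submodule.mul_induction_on hy ?_ ?_
    · intro m hm n hn
      have : n * (m * d) ∈ (1 : Submodule R K) :=
        Submodule.mem_div_iff_forall_mul_mem.mp hn _ (Submodule.mul_mem_mul hm hd)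
      have e : m * n * d = n * (m * d) := by ring
      rw [e]; exact this
    · intro u v hu hv
      have e : (u + v) * d = u * d + v * d := by ring
      rw [e]; exact Submodule.add_mem _ hu hv
  calc A * (1 / (1 / D)) * (1 / (A * D)) = (1 / (1 / D)) * (A * (1 / (A * D))) := by
        rw [mul_comm A (1 / (1 / D)), mul_assoc]
    _ ≤ (1 / (1 / D)) * (1 / D) := mul_le_mul' le_rfl h1
    _ ≤ 1 := by rw [mul_comm]; exact Submodule.mul_one_div_le_one

lemma mul_ne_bot {A B : Submodule R K} (hA : A ≠ ⊥) (hB : B ≠ ⊥) : A * B ≠ ⊥ := by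
  obtain ⟨a, haA, ha0⟩ := Submodule.exists_mem_ne_zero_of_ne_bot hA
  obtain ⟨b, hbB, hb0⟩ := Submodule.exists_mem_ne_zero_of_ne_bot hB
  intro h
  have : a * b ∈ A * B := Submodule.mul_mem_mul haA hbB
  rw [h, Submodule.mem_bot] at this
  exact mul_ne_zero ha0 hb0 this

lemma pow_ne_bot {A : Submodule R K} (hA : A ≠ ⊥) (k : ℕ) : A ^ k ≠ ⊥ := by
  induction k with
  | zero =>
      rw [pow_zero]
      intro h
      have : (1 : K) ∈ (1 : Submodule R K) := Submodule.one_le.mp le_rfl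
      rw [h, Submodule.mem_bot] at this
      exact one_ne_zero this
  | succ k ih =>
      rw [pow_succ]
      exact mul_ne_bot ih hA

lemma mul_tS_le (A B : Submodule R K) : A * tS R K B ≤ tS R K (A * B) := by
  rw [Submodule.mul_le]
  intro a ha y hy
  rcases eq_or_ne a 0 with rfl | ha0
  · rw [zero_mul]; exact (tS R K (A * B)).zero_mem
  rcases eq_or_ne B ⊥ with rfl | hB
  · rw [tS_bot, Submodule.mem_bot] at hy
    subst hy
    rw [mul_zero]; exact (tS R K (A * ⊥)).zero_mem
  obtain ⟨D, hD0, hDfg, hDle, hyD⟩ := exists_of_mem_tS hB hy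
  have key : a * y ∈ vS R K (Submodule.span R {a} * D) :=
    mul_vS_le (Submodule.span R {a}) D
      (Submodule.mul_mem_mul (Submodule.mem_span_singleton_self a) hyD)
  refine vS_le_tS ⟨?_, Submodule.FG.mul (Submodule.fg_span_singleton a) hDfg,
    mul_le_mul' ((Submodule.span_singleton_le_iff_mem a A).mpr ha) hDle⟩ key
  exact mul_ne_bot (by simpa [Submodule.span_singleton_eq_bot] using ha0) hD0

lemma tS_mul_right (A B : Submodule R K) : tS R K (A * tS R K B) = tS R K (A * B) :=
  le_antisymm ((tS_mono (mul_tS_le A B)).trans (tS_idem (A * B)).le)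
    (tS_mono (mul_le_mul' le_rfl (le_tS B)))

lemma tS_mul_congr {B B' : Submodule R K} (h : tS R K B = tS R K B') (A : Submodule R K) :
    tS R K (A * B) = tS R K (A * B') := by
  rw [← tS_mul_right A B, h, tS_mul_right]

lemma tS_mul_pow_congr {B B' : Submodule R K} (h : tS R K B = tS R K B') (A : Submodule R K)
    (k : ℕ) : tS R K (A * B ^ k) = tS R K (A * B' ^ k) := by
  induction k generalizing A with
  | zero => rw [pow_zero, pow_zero]
  | succ k ih =>
      rw [pow_succ, ← mul_assoc, tS_mul_congr h (A * B ^ k), mul_right_comm, ih (A * B'),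
        mul_assoc, ← pow_succ']

lemma tS_pow_congr {B B' : Submodule R K} (h : tS R K B = tS R K B') (k : ℕ) :
    tS R K (B ^ (k + 1)) = tS R K (B' ^ (k + 1)) := by
  calc tS R K (B ^ (k + 1)) = tS R K (B * B ^ k) := by rw [← pow_succ']
    _ = tS R K (B * B' ^ k) := tS_mul_pow_congr h B k
    _ = tS R K (B' ^ k * B) := by rw [mul_comm]
    _ = tS R K (B' ^ k * B') := tS_mul_congr h (B' ^ k)
    _ = tS R K (B' ^ (k + 1)) := by rw [← pow_succ]

/-! ### `idealToSub` lemmas -/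

lemma idealToSub_mono {I J : Ideal R} (h : I ≤ J) : idealToSub R K I ≤ idealToSub R K J :=
  Submodule.map_mono h

lemma idealToSub_fg {I : Ideal R} (h : I.FG) : (idealToSub R K I).FG :=
  Submodule.FG.map (Algebra.linearMap R K) h

lemma linearMap_eq_ofId : Algebra.linearMap R K = (Algebra.ofId R K).toLinearMap := rfl

lemma idealToSub_mul (I J : Ideal R) :
    idealToSub R K (I * J) = idealToSub R K I * idealToSub R K J := by
  show Submodule.map (Algebra.linearMap R K) (I * J) = _
  rw [linearMap_eq_ofId]
  exact Submodule.map_mul I J (Algebra.ofId R K)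

lemma idealToSub_pow (I : Ideal R) (k : ℕ) :
    idealToSub R K (I ^ k) = (idealToSub R K I) ^ k := by
  show Submodule.map (Algebra.linearMap R K) (I ^ k) = _
  rw [linearMap_eq_ofId]
  exact Submodule.map_pow I (Algebra.ofId R K) k

lemma idealToSub_sup (I J : Ideal R) :
    idealToSub R K (I ⊔ J) = idealToSub R K I ⊔ idealToSub R K J :=
  Submodule.map_sup I J _

lemma idealToSub_span_singleton (x : R) :
    idealToSub R K (Ideal.span {x}) = Submodule.span R {algebraMap R K x} := by
  show Submodule.map (Algebra.linearMap R K) (Submodule.span R {x}) = _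
  rw [Submodule.map_span, Set.image_singleton, Algebra.linearMap_apply]

lemma idealToSub_ne_bot [IsDomain R] [IsFractionRing R K] {I : Ideal R} (hI : I ≠ 0) :
    idealToSub R K I ≠ ⊥ := by
  obtain ⟨a, haI, ha0⟩ := Submodule.exists_mem_ne_zero_of_ne_bot hI
  intro h
  have hmem : algebraMap R K a ∈ idealToSub R K I := Submodule.mem_map_of_mem haI
  rw [h, Submodule.mem_bot] at hmem
  exact ha0 (IsFractionRing.injective R K (by rwa [map_zero]))

lemma tI_mono {I J : Ideal R} (h : I ≤ J) : tI R K I ≤ tI R K J :=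
  tS_mono (idealToSub_mono h)

/-- Closure lemma: if `x ∈ I_t` then `(I + (x))_t = I_t`. -/
lemma tI_add_span_eq {B : Ideal R} {x : R} (h : algebraMap R K x ∈ tI R K B) :
    tI R K (B + Ideal.span {x}) = tI R K B := by
  refine le_antisymm ?_ (tI_mono ?_)
  · have h1 : idealToSub R K (B + Ideal.span {x}) ≤ tS R K (idealToSub R K B) := by
      rw [Submodule.add_eq_sup, idealToSub_sup, idealToSub_span_singleton]
      exact sup_le (le_tS _) ((Submodule.span_singleton_le_iff_mem _ _).mpr h)
    exact (tS_mono h1).trans (tS_idem _).le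
  · rw [Submodule.add_eq_sup]
    exact le_sup_left

/-! ### Finitely generated sub-ideal extraction -/

lemma exists_fg_sub_of_mem {J : Ideal R} {M : Submodule R K} {x : K}
    (hx : x ∈ idealToSub R K J * M) :
    ∃ J' : Ideal R, J'.FG ∧ J' ≤ J ∧ x ∈ idealToSub R K J' * M := by
  refine Submodule.mul_induction_on hx ?_ ?_
  · intro y hy m hm
    obtain ⟨j, hjJ, rfl⟩ := Submodule.mem_map.mp hy
    refine ⟨Ideal.span {j}, Submodule.fg_span_singleton j,
      (Submodule.span_singleton_le_iff_mem j J).mpr hjJ,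
      Submodule.mul_mem_mul (Submodule.mem_map_of_mem (Submodule.mem_span_singleton_self j)) hm⟩
  · rintro y z ⟨J₁, h1, h2, h3⟩ ⟨J₂, g1, g2, g3⟩
    refine ⟨J₁ ⊔ J₂, Submodule.FG.sup h1 g1, sup_le h2 g2, Submodule.add_mem _ ?_ ?_⟩
    · exact mul_le_mul' (idealToSub_mono le_sup_left) le_rfl h3
    · exact mul_le_mul' (idealToSub_mono le_sup_right) le_rfl g3

lemma exists_fg_ideal_of_fg_le {J : Ideal R} {M D : Submodule R K} (hD : D.FG)
    (hle : D ≤ idealToSub R K J * M) :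
    ∃ J' : Ideal R, J'.FG ∧ J' ≤ J ∧ D ≤ idealToSub R K J' * M := by
  obtain ⟨s, rfl⟩ := hD
  have hsub : (↑s : Set K) ⊆ (idealToSub R K J * M : Submodule R K) := fun y hy =>
    hle (Submodule.subset_span hy)
  clear hle
  classical
  induction s using Finset.induction_on with
  | empty =>
      exact ⟨⊥, Submodule.fg_bot, bot_le, by simp⟩
  | @insert x s hxs ih =>
      have hx : x ∈ idealToSub R K J * M := hsub (by simp)
      obtain ⟨J₁, h1fg, h1le, h1mem⟩ := exists_fg_sub_of_mem hx
      obtain ⟨J₂, h2fg, h2le, h2mem⟩ := ih (fun y hy => hsub (by simp [hy]))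
      refine ⟨J₁ ⊔ J₂, Submodule.FG.sup h1fg h2fg, sup_le h1le h2le, ?_⟩
      rw [Finset.coe_insert, Submodule.span_insert]
      refine sup_le ?_ (h2mem.trans (mul_le_mul' (idealToSub_mono le_sup_right) le_rfl))
      refine (Submodule.span_singleton_le_iff_mem x _).mpr ?_
      exact mul_le_mul' (idealToSub_mono le_sup_left) le_rfl h1mem

/-! ### The peeling argument -/

lemma peel [IsDomain R] [IsFractionRing R K]
    (H : ∀ I : Ideal R, I ≠ 0 → I.FG → ∀ x : R,
        (algebraMap R K x ∈ tI R K I ↔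
          ∃ n : ℕ, tI R K (I * (I + Ideal.span {x}) ^ n)
            = tI R K ((I + Ideal.span {x}) ^ (n + 1))))
    (I : Ideal R) (n : ℕ) (l : List R) :
    ∀ B : Ideal R, B ≠ 0 → B.FG → B ≤ I →
      tS R K (idealToSub R K B * (idealToSub R K I) ^ n)
        = tS R K ((idealToSub R K I) ^ (n + 1)) →
      B ⊔ Ideal.span {a | a ∈ l} = I →
      tI R K B = tI R K I := by
  induction l with
  | nil =>
      intro B _ _ _ _ hBl
      have : B = I := by
        have he : ({a | a ∈ ([] : List R)} : Set R) = ∅ := by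
          ext y; simp
        rwa [he, Ideal.span_empty, sup_bot_eq] at hBl
      rw [this]
  | cons a l ih =>
      intro B hB0 hBfg hBle hBred hBl
      set B₂ := B + Ideal.span {a} with hB₂def
      have hBB₂ : B ≤ B₂ := by
        rw [hB₂def, Submodule.add_eq_sup]; exact le_sup_left
      have haI : a ∈ I := by
        rw [← hBl]
        exact Submodule.mem_sup_right (Ideal.subset_span (by simp))
      have hB₂le : B₂ ≤ I := by
        rw [hB₂def, Submodule.add_eq_sup]
        exact sup_le hBle ((Submodule.span_singleton_le_iff_mem a I).mpr haI)
      have hB₂0 : B₂ ≠ 0 := by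
        intro h
        apply hB0
        rw [Ideal.zero_eq_bot] at h ⊢
        exact le_bot_iff.mp (h ▸ hBB₂)
      have hB₂fg : B₂.FG := by
        rw [hB₂def, Submodule.add_eq_sup]
        exact Submodule.FG.sup hBfg (Submodule.fg_span_singleton a)
      have hB₂red : tS R K (idealToSub R K B₂ * (idealToSub R K I) ^ n)
          = tS R K ((idealToSub R K I) ^ (n + 1)) := by
        refine le_antisymm (tS_mono ?_) ?_
        · calc idealToSub R K B₂ * (idealToSub R K I) ^ n
              ≤ idealToSub R K I * (idealToSub R K I) ^ n :=
                mul_le_mul' (idealToSub_mono hB₂le) le_rfl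
            _ = (idealToSub R K I) ^ (n + 1) := (pow_succ' _ _).symm
        · rw [← hBred]
          exact tS_mono (mul_le_mul' (idealToSub_mono hBB₂) le_rfl)
      have hBl₂ : B₂ ⊔ Ideal.span {y | y ∈ l} = I := by
        rw [hB₂def, Submodule.add_eq_sup, sup_assoc, ← Ideal.span_union, ← hBl]
        congr 2
        ext y
        simp
      have hIH : tI R K B₂ = tI R K I := ih B₂ hB₂0 hB₂fg hB₂le hB₂red hBl₂
      have e1 : tS R K (idealToSub R K B₂) = tS R K (idealToSub R K I) := hIH
      have hkey : tI R K (B * B₂ ^ n) = tI R K (B₂ ^ (n + 1)) := by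
        calc tI R K (B * B₂ ^ n)
            = tS R K (idealToSub R K B * (idealToSub R K B₂) ^ n) := by
              rw [tI, idealToSub_mul, idealToSub_pow]
          _ = tS R K (idealToSub R K B * (idealToSub R K I) ^ n) :=
              tS_mul_pow_congr e1 _ n
          _ = tS R K ((idealToSub R K I) ^ (n + 1)) := hBred
          _ = tS R K ((idealToSub R K B₂) ^ (n + 1)) := (tS_pow_congr e1 n).symm
          _ = tI R K (B₂ ^ (n + 1)) := by rw [tI, idealToSub_pow]
      have hmem : algebraMap R K a ∈ tI R K B := (H B hB0 hBfg a).mpr ⟨n, hkey⟩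
      have h2 : tI R K B₂ = tI R K B := tI_add_span_eq hmem
      exact h2.symm.trans hIH

end TBasicAux

open TBasicAux in
/-- A domain `R` has the finite `t`-basic ideal property iff for every nonzero finitely
generated ideal `I`, `I_t` equals `Î = {x ∈ R : I is a t-reduction of (I, x)}`. -/
theorem finite_t_basic_iff_t_closure_eq_hat (R K : Type*) [CommRing R] [IsDomain R]
    [Field K] [Algebra R K] [IsFractionRing R K] :
    (∀ I : Ideal R, I ≠ 0 → I.FG → ∀ J : Ideal R, J ≠ 0 → J ≤ I →
      (∃ n : ℕ, tI R K (J * I ^ n) = tI R K (I ^ (n + 1))) → tI R K J = tI R K I)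
    ↔ (∀ I : Ideal R, I ≠ 0 → I.FG → ∀ x : R,
        (algebraMap R K x ∈ tI R K I ↔
          ∃ n : ℕ, tI R K (I * (I + Ideal.span {x}) ^ n)
            = tI R K ((I + Ideal.span {x}) ^ (n + 1)))) := by
  constructor
  · -- finite t-basic ⟹ hat characterization
    intro hbasic I hI0 hIfg x
    constructor
    · intro hx
      refine ⟨0, ?_⟩
      rw [pow_zero, mul_one, zero_add, pow_one]
      exact (tI_add_span_eq hx).symm
    · rintro ⟨ν, hred⟩
      have hle : I ≤ I + Ideal.span {x} := by
        rw [Submodule.add_eq_sup]; exact le_sup_left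
      have hI'0 : I + Ideal.span {x} ≠ 0 := by
        intro h
        apply hI0
        rw [Ideal.zero_eq_bot] at h ⊢
        exact le_bot_iff.mp (h ▸ hle)
      have hI'fg : (I + Ideal.span {x}).FG := by
        rw [Submodule.add_eq_sup]
        exact Submodule.FG.sup hIfg (Submodule.fg_span_singleton x)
      have heq : tI R K I = tI R K (I + Ideal.span {x}) :=
        hbasic (I + Ideal.span {x}) hI'0 hI'fg I hI0 hle ⟨ν, hred⟩
      rw [heq]
      refine le_tS _ (Submodule.mem_map_of_mem ?_)
      rw [Submodule.add_eq_sup]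
      exact Submodule.mem_sup_right (Submodule.mem_span_singleton_self x)
  · -- hat characterization ⟹ finite t-basic
    intro H I hI0 hIfg J hJ0 hJle ⟨n, hn⟩
    -- rewrite the t-reduction hypothesis at submodule level
    rw [tI, tI, idealToSub_mul, idealToSub_pow, idealToSub_pow] at hn
    have h𝕀fg : ((idealToSub R K I) ^ (n + 1)).FG := Submodule.FG.pow (idealToSub_fg hIfg) _
    have h𝕀0 : idealToSub R K I ≠ ⊥ := idealToSub_ne_bot hI0
    have h𝕁0 : idealToSub R K J ≠ ⊥ := idealToSub_ne_bot hJ0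
    have hprod0 : idealToSub R K J * (idealToSub R K I) ^ n ≠ ⊥ :=
      mul_ne_bot h𝕁0 (pow_ne_bot h𝕀0 n)
    have hIpow_le : (idealToSub R K I) ^ (n + 1)
        ≤ tS R K (idealToSub R K J * (idealToSub R K I) ^ n) := by
      calc (idealToSub R K I) ^ (n + 1) ≤ tS R K ((idealToSub R K I) ^ (n + 1)) := le_tS _
        _ = tS R K (idealToSub R K J * (idealToSub R K I) ^ n) := hn.symm
    obtain ⟨D, hD0, hDfg, hDle, hDv⟩ := fg_le_tS_exists hprod0 h𝕀fg hIpow_le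
    obtain ⟨J₁', hJ₁'fg, hJ₁'le, hDle'⟩ := exists_fg_ideal_of_fg_le hDfg hDle
    obtain ⟨j₀, hj₀J, hj₀0⟩ := Submodule.exists_mem_ne_zero_of_ne_bot hJ0
    set J₁ := J₁' ⊔ Ideal.span {j₀} with hJ₁def
    have hJ₁fg : J₁.FG := Submodule.FG.sup hJ₁'fg (Submodule.fg_span_singleton j₀)
    have hJ₁le : J₁ ≤ J := sup_le hJ₁'le ((Submodule.span_singleton_le_iff_mem j₀ J).mpr hj₀J)
    have hJ₁0 : J₁ ≠ 0 := by
      intro h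
      rw [Ideal.zero_eq_bot] at h
      have : Ideal.span {j₀} = ⊥ := le_bot_iff.mp (h ▸ (le_sup_right : Ideal.span {j₀} ≤ J₁))
      exact hj₀0 (Submodule.span_singleton_eq_bot.mp this)
    have hJ₁prod0 : idealToSub R K J₁ * (idealToSub R K I) ^ n ≠ ⊥ :=
      mul_ne_bot (idealToSub_ne_bot hJ₁0) (pow_ne_bot h𝕀0 n)
    have hJ₁red : tS R K (idealToSub R K J₁ * (idealToSub R K I) ^ n)
        = tS R K ((idealToSub R K I) ^ (n + 1)) := by
      refine le_antisymm (tS_mono ?_) ?_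
      · calc idealToSub R K J₁ * (idealToSub R K I) ^ n
            ≤ idealToSub R K I * (idealToSub R K I) ^ n :=
              mul_le_mul' (idealToSub_mono (hJ₁le.trans hJle)) le_rfl
          _ = (idealToSub R K I) ^ (n + 1) := (pow_succ' _ _).symm
      · have hstep : (idealToSub R K I) ^ (n + 1)
            ≤ tS R K (idealToSub R K J₁ * (idealToSub R K I) ^ n) := by
          refine hDv.trans ((vS_mono ?_).trans (vS_le_tS ⟨hJ₁prod0, ?_, le_rfl⟩))
          · exact hDle'.trans (mul_le_mul' (idealToSub_mono le_sup_left) le_rfl)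
          · exact Submodule.FG.mul (idealToSub_fg hJ₁fg) (Submodule.FG.pow (idealToSub_fg hIfg) n)
        exact (tS_mono hstep).trans (tS_idem _).le
    obtain ⟨s, hs⟩ := hIfg
    have hsup : J₁ ⊔ Ideal.span {y | y ∈ s.toList} = I := by
      have he : ({y | y ∈ s.toList} : Set R) = (↑s : Set R) := by
        ext y; simp [Finset.mem_toList]
      rw [he, hs]
      exact sup_eq_right.mpr (hJ₁le.trans hJle)
    have hpeel : tI R K J₁ = tI R K I :=
      peel H I n s.toList J₁ hJ₁0 hJ₁fg (hJ₁le.trans hJle) hJ₁red hsup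
    refine le_antisymm (tI_mono hJle) ?_
    calc tI R K I = tI R K J₁ := hpeel.symm
      _ ≤ tI R K J := tI_mono hJ₁le
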